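/- Let M be a smooth finite-dimensional manifold, x ∈ M, and s : M → M a smooth diffeomorphism with s(x) = x whose differential at x equals −id on T_xM. Then for every smooth vector field Y on M the vector field Y + s_*Y vanishes at x, and consequently for all smooth vector fields X, Y and every smooth function f on M one has (1/2)[fX, Y + s_*Y]_x = f(x)·(1/2)[X, Y + s_*Y]_x; that is, the operator (∇_X Y)_x := (1/2)[X, Y + s_*Y]_x is C^∞(M)-linear in its first argument. -/

import Mathlib

open scoped Manifold
local notation "∞" => (⊤ : ℕ∞)

/-- The pushforward of a vector field (viewed, as is standard, as a derivation of the
algebra of smooth functions) along a diffeomorphism `s` with smooth inverse `sinv`: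
`(s_*Y) f = (Y (f ∘ s)) ∘ s⁻¹`. -/
noncomputable def pushforwardVF
    {E : Type*} [NormedAddCommGroup E] [NormedSpace ℝ E]
    {H : Type*} [TopologicalSpace H] {I : ModelWithCorners ℝ E H}
    {M : Type*} [TopologicalSpace M] [ChartedSpace H M]
    (s sinv : C^∞⟮I, M; I, M⟯) (hs : ∀ z : M, s (sinv z) = z)
    (Y : Derivation ℝ C^∞⟮I, M; ℝ⟯ C^∞⟮I, M; ℝ⟯) :
    Derivation ℝ C^∞⟮I, M; ℝ⟯ C^∞⟮I, M; ℝ⟯ :=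
  Derivation.mk'
    { toFun := fun f => (Y (f.comp s)).comp sinv
      map_add' := fun f g => by
        show (Y ((f + g).comp s)).comp sinv
            = (Y (f.comp s)).comp sinv + (Y (g.comp s)).comp sinv
        rw [ContMDiffMap.add_comp, map_add, ContMDiffMap.add_comp]
      map_smul' := fun c f => by
        show (Y ((c • f).comp s)).comp sinv = c • (Y (f.comp s)).comp sinv
        rw [ContMDiffMap.smul_comp, Derivation.map_smul, ContMDiffMap.smul_comp] }
    (fun f g => by
      show (Y ((f * g).comp s)).comp sinv
          = f • (Y (g.comp s)).comp sinv + g • (Y (f.comp s)).comp sinv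
      rw [ContMDiffMap.mul_comp, Derivation.leibniz]
      ext z
      simp [hs z])

/-- (C^∞-linearity part of Proposition 1.3.) Let `M` be a smooth
finite-dimensional manifold, `x ∈ M`, and `s` a smooth diffeomorphism of `M` (with
smooth inverse `sinv`) such that `s x = x` and whose differential at `x` is `-id`
on `T_xM`. Then for every smooth vector field `Y` the vector field `Y + s_*Y`
vanishes at `x`, and consequently for all vector fields `X, Y` and every smooth
function `f`, `(1/2)[fX, Y + s_*Y]_x = f(x)·(1/2)[X, Y + s_*Y]_x`. -/
theorem statement0
    {E : Type*} [NormedAddCommGroup E] [NormedSpace ℝ E] [FiniteDimensional ℝ E]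
    {H : Type*} [TopologicalSpace H] {I : ModelWithCorners ℝ E H} [I.Boundaryless]
    {M : Type*} [TopologicalSpace M] [ChartedSpace H M] [IsManifold I ∞ M]
    [T2Space M]
    (x : M) (s sinv : C^∞⟮I, M; I, M⟯)
    (hinv : ∀ z : M, s (sinv z) = z) (hinv' : ∀ z : M, sinv (s z) = z)
    (hsx : s x = x)
    (hds : ∀ v : PointDerivation I x, 𝒅ₕ hsx v = -v) :
    (∀ Y : Derivation ℝ C^∞⟮I, M; ℝ⟯ C^∞⟮I, M; ℝ⟯,
        Derivation.evalAt x (Y + pushforwardVF s sinv hinv Y) = 0)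
    ∧ ∀ (X Y : Derivation ℝ C^∞⟮I, M; ℝ⟯ C^∞⟮I, M; ℝ⟯) (f : C^∞⟮I, M; ℝ⟯),
        (1/2 : ℝ) • Derivation.evalAt x ⁅f • X, Y + pushforwardVF s sinv hinv Y⁆
          = f x • ((1/2 : ℝ) •
              Derivation.evalAt x ⁅X, Y + pushforwardVF s sinv hinv Y⁆) := by
  have hxx : sinv x = x := by have := hinv' x; rwa [hsx] at this
  have hZ : ∀ (Y : Derivation ℝ C^∞⟮I, M; ℝ⟯ C^∞⟮I, M; ℝ⟯) (g : C^∞⟮I, M; ℝ⟯),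
      (Y + pushforwardVF s sinv hinv Y) g x = 0 := by
    intro Y g
    have h2 : (Y (g.comp s)) x = - (Y g x) := by
      have h3 := DFunLike.congr_fun (hds (Derivation.evalAt x Y)) g
      exact h3
    have h1 : (pushforwardVF s sinv hinv Y) g x = (Y (g.comp s)) x := by
      show (Y (g.comp s)) (sinv x) = _
      rw [hxx]
    show (Y g) x + ((pushforwardVF s sinv hinv Y) g) x = 0
    rw [h1, h2]; ring
  constructor
  · intro Y
    ext g
    exact hZ Y g
  · intro X Y f
    set Z := Y + pushforwardVF s sinv hinv Y with hZdef
    ext g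
    change C^∞⟮I, M; ℝ⟯ at g
    have hZf : Z f x = 0 := hZ Y f
    show (1/2 : ℝ) * (⁅f • X, Z⁆ g) x = f x * ((1/2 : ℝ) * (⁅X, Z⁆ g) x)
    rw [Derivation.commutator_apply, Derivation.commutator_apply]
    have e1 : (f • X) (Z g) = f * X (Z g) := rfl
    have e2 : Z ((f • X) g) = f • Z (X g) + (X g) • Z f := by
      show Z (f * X g) = _
      rw [Derivation.leibniz]
    rw [e1, e2]
    simp [hZf]
    ring
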